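/- Let E be a Banach lattice, let μ be a locally finite Borel measure on ℝ^d with μ(ℝ^d) = ∞, and let r ∈ (1,∞). Assume there is a constant C such that for each finite collection D of dyadic cubes and each locally integrable function f: ℝ^d → E there exists a sparse subcollection S ⊆ D with ‖M̃^μ_D f(x)‖_E ≤ C · A^μ_{r,S}(‖f‖_E)(x) for μ-almost every x. Then E satisfies an upper r-estimate: there is a constant C' such that for all pairwise disjoint vectors e_1, …, e_n ∈ E (i.e. inf{|e_j|,|e_k|} = 0 for j ≠ k) one has ‖∑_{k=1}^n e_k‖_E ≤ C' (∑_{k=1}^n ‖e_k‖_E^r)^{1/r}. -/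

import Mathlib

open MeasureTheory ENNReal Set

attribute [local instance] Classical.propDecidable

/-- A dyadic cube in `ℝ^d`, given by a generation `k : ℤ` and a position `m : Fin d → ℤ`;
its underlying set is `∏_i [2^k m i, 2^k (m i + 1))`. -/
structure DyadicCube (d : ℕ) where
  k : ℤ
  m : Fin d → ℤ
deriving DecidableEq

/-- The underlying set of a dyadic cube. -/
def DyadicCube.set {d : ℕ} (Q : DyadicCube d) : Set (Fin d → ℝ) :=
  {x | ∀ i, (2 : ℝ) ^ Q.k * Q.m i ≤ x i ∧ x i < (2 : ℝ) ^ Q.k * (Q.m i + 1)}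

/-- A (non-dyadic) axis-parallel cube in `ℝ^d`, given by its corner and side length. -/
structure Cube (d : ℕ) where
  c : Fin d → ℝ
  len : ℝ
  len_pos : 0 < len

/-- The underlying set of an axis-parallel cube. -/
def Cube.set {d : ℕ} (Q : Cube d) : Set (Fin d → ℝ) :=
  {x | ∀ i, Q.c i ≤ x i ∧ x i < Q.c i + Q.len}

/-- The average `⟨f⟩^μ_A = (1/μ(A)) ∫_A f dμ` of a vector-valued function. -/
noncomputable def avg {d : ℕ} {E : Type*} [NormedAddCommGroup E] [NormedSpace ℝ E]
    (μ : Measure (Fin d → ℝ)) (A : Set (Fin d → ℝ)) (f : (Fin d → ℝ) → E) : E :=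
  (μ A).toReal⁻¹ • ∫ x in A, f x ∂μ

/-- The dyadic lattice Hardy–Littlewood maximal operator
`M̃^μ_D f (x) = sup_{Q ∈ D} ⟨|f|⟩^μ_Q 1_Q(x)` (a lattice supremum of finitely many
positive elements, realized as a fold of `⊔` with base point `0`). -/
noncomputable def dyadicMaximal {d : ℕ} {E : Type*} [NormedAddCommGroup E] [Lattice E] [HasSolidNorm E] [IsOrderedAddMonoid E]
    [NormedSpace ℝ E] (μ : Measure (Fin d → ℝ)) (D : Finset (DyadicCube d))
    (f : (Fin d → ℝ) → E) (x : Fin d → ℝ) : E :=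
  D.fold (· ⊔ ·) 0 fun Q => Set.indicator Q.set (fun _ => avg μ Q.set fun y => |f y|) x

/-- A collection of dyadic cubes is sparse (w.r.t. `μ`): each `Q` in the collection carries a
measurable subset `E_Q ⊆ Q` with `μ(Q) ≤ 2 μ(E_Q)`, the subsets being pairwise disjoint. -/
def IsSparse {d : ℕ} (μ : Measure (Fin d → ℝ)) (S : Finset (DyadicCube d)) : Prop :=
  ∃ ES : DyadicCube d → Set (Fin d → ℝ),
    (∀ Q ∈ S, ES Q ⊆ Q.set ∧ MeasurableSet (ES Q) ∧ μ Q.set ≤ 2 * μ (ES Q)) ∧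
    (S : Set (DyadicCube d)).Pairwise fun Q Q' => Disjoint (ES Q) (ES Q')

/-- The sparse operator `A^μ_{q,S} f (x) = (∑_{Q ∈ S} ⟨|f|⟩_Q^q 1_Q(x))^{1/q}` acting on
scalar-valued functions. -/
noncomputable def sparseOp {d : ℕ} (μ : Measure (Fin d → ℝ)) (q : ℝ)
    (S : Finset (DyadicCube d)) (f : (Fin d → ℝ) → ℝ) (x : Fin d → ℝ) : ℝ :=
  (∑ Q ∈ S, Set.indicator Q.set (fun _ => avg μ Q.set (fun y => |f y|) ^ q) x) ^ (1 / q)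

/-- `q`-convexity of a Banach lattice with constant `C`:
`‖(∑ |e k|^q)^{1/q}‖ ≤ C (∑ ‖e k‖^q)^{1/q}`. The Krivine element `(∑ |e k|^q)^{1/q}` is
characterized as the least upper bound of all combinations `∑ a k • |e k|` where the
nonnegative coefficients `a` lie in the unit ball of the norm dual to the `ℓ^q`-norm. -/
def IsQConvexWith (E : Type*) [NormedAddCommGroup E] [Lattice E] [HasSolidNorm E] [IsOrderedAddMonoid E] [NormedSpace ℝ E]
    (q C : ℝ) : Prop :=
  ∀ (n : ℕ) (e : Fin n → E) (s : E),
    IsLUB {x : E | ∃ a : Fin n → ℝ, (∀ k, 0 ≤ a k) ∧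
        (∀ t : Fin n → ℝ, (∀ k, 0 ≤ t k) → ∑ k, a k * t k ≤ (∑ k, t k ^ q) ^ (1 / q)) ∧
        x = ∑ k, a k • |e k|} s →
    ‖s‖ ≤ C * (∑ k, ‖e k‖ ^ q) ^ (1 / q)

/-- The Hardy–Littlewood property of a Banach lattice `E`: for some `p ∈ (1,∞)` the dyadic
lattice maximal operators (w.r.t. Lebesgue measure) are bounded on `L^p(dx; E)` uniformly in
the finite collection of dyadic cubes. -/
def HasHLProperty (d : ℕ) (E : Type*) [NormedAddCommGroup E] [Lattice E] [HasSolidNorm E] [IsOrderedAddMonoid E] [NormedSpace ℝ E] : Prop :=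
  ∃ p : ℝ, 1 < p ∧ ∃ C : ℝ, ∀ (D : Finset (DyadicCube d)) (f : (Fin d → ℝ) → E),
    MemLp f (ENNReal.ofReal p) volume →
    eLpNorm (dyadicMaximal volume D f) (ENNReal.ofReal p) volume ≤
      ENNReal.ofReal C * eLpNorm f (ENNReal.ofReal p) volume

/-- Order continuity of a Banach lattice: every downward directed set with infimum `0`
contains elements of arbitrarily small norm cofinally (i.e. the corresponding decreasing net
converges to `0` in norm). -/
def IsOrderContinuous (E : Type*) [NormedAddCommGroup E] [Lattice E] [HasSolidNorm E] [IsOrderedAddMonoid E] : Prop :=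
  ∀ A : Set E, A.Nonempty → DirectedOn (· ≥ ·) A → IsGLB A 0 →
    ∀ ε : ℝ, 0 < ε → ∃ a ∈ A, ∀ b ∈ A, b ≤ a → ‖b‖ < ε


/-! ### Auxiliary lemmas -/

section LatticeLemmas
variable {E : Type*} [NormedAddCommGroup E] [Lattice E] [HasSolidNorm E] [IsOrderedAddMonoid E]

lemma my_inf_add_inf {a b c : E} (ha : 0 ≤ a) (hb : 0 ≤ b) (hc : 0 ≤ c) :
    (a + b) ⊓ c ≤ a ⊓ c + b ⊓ c := by
  have h1 : a ⊓ c + b ⊓ c = ((a + b) ⊓ (a + c)) ⊓ ((c + b) ⊓ (c + c)) := by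
    rw [inf_add a c (b ⊓ c), add_inf b c a, add_inf b c c]
  rw [h1]
  refine le_inf (le_inf inf_le_left (inf_le_right.trans (le_add_of_nonneg_left ha)))
    (le_inf (inf_le_right.trans (le_add_of_nonneg_right hb))
      (inf_le_right.trans (le_add_of_nonneg_right hc)))

lemma my_sum_inf_eq_zero {ι : Type*} {s : Finset ι} {e : ι → E} {c : E}
    (he : ∀ i ∈ s, 0 ≤ e i) (hc : 0 ≤ c) (hd : ∀ i ∈ s, e i ⊓ c = 0) :
    (∑ i ∈ s, e i) ⊓ c = 0 := by
  classical
  induction s using Finset.induction_on with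
  | empty => simpa using inf_eq_right.2 hc
  | insert _ _ hnotmem ih =>
    rename_i a s
    rw [Finset.sum_insert hnotmem]
    have hsum : 0 ≤ ∑ i ∈ s, e i :=
      Finset.sum_nonneg fun i hi => he i (Finset.mem_insert_of_mem hi)
    have h1 := my_inf_add_inf (he a (Finset.mem_insert_self a s)) hsum hc
    have h2 : e a ⊓ c = 0 := hd a (Finset.mem_insert_self a s)
    have h3 : (∑ i ∈ s, e i) ⊓ c = 0 :=
      ih (fun i hi => he i (Finset.mem_insert_of_mem hi))
        (fun i hi => hd i (Finset.mem_insert_of_mem hi))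
    refine le_antisymm ?_ (le_inf (add_nonneg (he a (Finset.mem_insert_self a s)) hsum) hc)
    calc (e a + ∑ i ∈ s, e i) ⊓ c ≤ e a ⊓ c + (∑ i ∈ s, e i) ⊓ c := h1
    _ = 0 := by rw [h2, h3, add_zero]

lemma my_sum_le_of_pairwise_disjoint {ι : Type*} {s : Finset ι} {e : ι → E} {z : E}
    (he : ∀ i ∈ s, 0 ≤ e i) (hd : ∀ i ∈ s, ∀ j ∈ s, i ≠ j → e i ⊓ e j = 0)
    (hz : 0 ≤ z) (hez : ∀ i ∈ s, e i ≤ z) :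
    ∑ i ∈ s, e i ≤ z := by
  classical
  induction s using Finset.induction_on with
  | empty => simpa using hz
  | insert _ _ hnotmem ih =>
    rename_i a s
    rw [Finset.sum_insert hnotmem]
    have hmem := Finset.mem_insert_self a s
    have hsub : ∀ i ∈ s, i ∈ insert a s := fun i hi => Finset.mem_insert_of_mem hi
    have hdisj : (∑ i ∈ s, e i) ⊓ e a = 0 :=
      my_sum_inf_eq_zero (fun i hi => he i (hsub i hi)) (he a hmem)
        (fun i hi => hd i (hsub i hi) a hmem (by rintro rfl; exact hnotmem hi))
    have hsup : e a + ∑ i ∈ s, e i = e a ⊔ ∑ i ∈ s, e i := by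
      have h := inf_add_sup (e a) (∑ i ∈ s, e i)
      rw [inf_comm] at hdisj
      rw [hdisj, zero_add] at h
      exact h.symm
    rw [hsup]
    exact sup_le (hez a hmem)
      (ih (fun i hi => he i (hsub i hi)) (fun i hi j hj => hd i (hsub i hi) j (hsub j hj))
        (fun i hi => hez i (hsub i hi)))

lemma my_abs_sum_le {ι : Type*} (s : Finset ι) (v : ι → E) :
    |∑ i ∈ s, v i| ≤ ∑ i ∈ s, |v i| := by
  classical
  induction s using Finset.induction_on with
  | empty => simp
  | insert _ _ hnotmem ih =>
    rename_i a s
    rw [Finset.sum_insert hnotmem, Finset.sum_insert hnotmem]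
    exact (abs_add_le _ _).trans (add_le_add_right ih _)

end LatticeLemmas

section SmulLemmas
variable {E : Type*} [NormedAddCommGroup E] [Lattice E] [HasSolidNorm E] [IsOrderedAddMonoid E] [NormedSpace ℝ E]

lemma my_nsmul_semiclosed {a : E} (n : ℕ) (h : 0 ≤ (2 ^ n : ℕ) • a) : 0 ≤ a := by
  induction n with
  | zero => simpa using h
  | succ n ih =>
    have h' : 0 ≤ (2 : ℕ) • ((2 ^ n : ℕ) • a) := by
      rw [smul_smul, ← pow_succ']; exact h
    exact ih (nsmul_two_semiclosed h')

lemma my_smul_nonneg {c : ℝ} {x : E} (hc : 0 ≤ c) (hx : 0 ≤ x) : 0 ≤ c • x := by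
  have dyadic : ∀ (k m : ℕ), 0 ≤ (((k : ℝ) / 2 ^ m) • x) := by
    intro k m
    refine my_nsmul_semiclosed m ?_
    rw [← Nat.cast_smul_eq_nsmul ℝ, smul_smul]
    push_cast
    rw [mul_div_cancel₀ _ (by positivity)]
    rw [Nat.cast_smul_eq_nsmul ℝ]
    exact nsmul_nonneg hx k
  set u : ℕ → ℝ := fun m => (Nat.floor (c * 2 ^ m) : ℝ) / 2 ^ m with hu
  have hul : ∀ m, c - (1/2) ^ m ≤ u m := by
    intro m
    have hfl : c * 2 ^ m - 1 ≤ (Nat.floor (c * 2 ^ m) : ℝ) := by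
      have := Nat.lt_floor_add_one (c * 2 ^ m); linarith
    rw [hu]
    rw [le_div_iff₀ (by positivity : (0:ℝ) < 2 ^ m)]
    have h2 : (1/2:ℝ)^m * 2^m = 1 := by
      rw [one_div, inv_pow, inv_mul_cancel₀ (by positivity)]
    nlinarith [hfl, h2]
  have hur : ∀ m, u m ≤ c := by
    intro m
    rw [hu, div_le_iff₀ (by positivity)]
    exact Nat.floor_le (by positivity)
  have htend : Filter.Tendsto u Filter.atTop (nhds c) := by
    have h1 : Filter.Tendsto (fun m : ℕ => c - (1/2:ℝ) ^ m) Filter.atTop (nhds c) := by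
      have := tendsto_pow_atTop_nhds_zero_of_lt_one
        (by norm_num : (0:ℝ) ≤ 1/2) (by norm_num : (1/2:ℝ) < 1)
      simpa using Filter.Tendsto.const_sub c this
    exact tendsto_of_tendsto_of_tendsto_of_le_of_le h1 tendsto_const_nhds hul hur
  have htend2 : Filter.Tendsto (fun m => u m • x) Filter.atTop (nhds (c • x)) :=
    htend.smul_const x
  refine IsClosed.mem_of_tendsto isClosed_nonneg htend2 (Filter.Eventually.of_forall ?_)
  intro m
  exact dyadic _ m

lemma my_smul_le_smul {a b : ℝ} {x : E} (hab : a ≤ b) (hx : 0 ≤ x) : a • x ≤ b • x := by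
  have h := my_smul_nonneg (sub_nonneg.2 hab) hx
  rw [sub_smul] at h
  exact sub_nonneg.1 h

lemma my_smul_le_smul_vec {x y : E} (c : ℝ) (hc : 0 ≤ c) (hxy : x ≤ y) : c • x ≤ c • y := by
  have h := my_smul_nonneg hc (sub_nonneg.2 hxy)
  rw [smul_sub] at h
  exact sub_nonneg.1 h

end SmulLemmas

section FoldLemmas

lemma my_le_fold {ι E : Type*} [Lattice E] (s : Finset ι) (g : ι → E) (b : E) :
    b ≤ Finset.fold ((· ⊔ ·) : E → E → E) b g s ∧
      ∀ a ∈ s, g a ≤ Finset.fold ((· ⊔ ·) : E → E → E) b g s := by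
  classical
  induction s using Finset.induction_on with
  | empty => simp
  | insert _ _ hnotmem ih =>
    rename_i a s
    rw [Finset.fold_insert hnotmem]
    refine ⟨ih.1.trans le_sup_right, ?_⟩
    intro c hc
    rcases Finset.mem_insert.1 hc with rfl | hc
    · exact le_sup_left
    · exact (ih.2 c hc).trans le_sup_right

lemma my_indicator_sum {ι X E F : Type*} [AddCommMonoid E] [AddCommMonoid F]
    (s : Finset ι) (A : ι → Set X) (e : ι → E) (g : E → F) (hg : g 0 = 0)
    (hd : ∀ i ∈ s, ∀ j ∈ s, i ≠ j → Disjoint (A i) (A j)) (x : X) :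
    g (∑ i ∈ s, (A i).indicator (fun _ => e i) x) =
      ∑ i ∈ s, (A i).indicator (fun _ => g (e i)) x := by
  classical
  by_cases hx : ∃ i ∈ s, x ∈ A i
  · obtain ⟨i, hi, hxi⟩ := hx
    rw [Finset.sum_eq_single_of_mem i hi (fun j hj hji => Set.indicator_of_notMem
      (Set.disjoint_right.1 (hd j hj i hi hji) hxi) _)]
    rw [Finset.sum_eq_single_of_mem i hi (fun j hj hji => Set.indicator_of_notMem
      (Set.disjoint_right.1 (hd j hj i hi hji) hxi) _)]
    rw [Set.indicator_of_mem hxi, Set.indicator_of_mem hxi]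
  · push_neg at hx
    rw [Finset.sum_eq_zero fun i hi => Set.indicator_of_notMem (hx i hi) _,
      Finset.sum_eq_zero fun i hi => Set.indicator_of_notMem (hx i hi) _, hg]

lemma my_geom_sum {ι : Type*} (s : Finset ι) (φ : ι → ℕ)
    (hinj : ∀ i ∈ s, ∀ j ∈ s, φ i = φ j → i = j) :
    ∑ i ∈ s, ((1:ℝ)/2) ^ (φ i) ≤ 2 := by
  classical
  rw [← Finset.sum_image (g := φ) (f := fun m => ((1:ℝ)/2)^m) hinj]
  set t := s.image φ with ht
  have hsub : t ⊆ Finset.range (t.sup id + 1) := fun m hm =>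
    Finset.mem_range.2 (Nat.lt_succ_of_le (Finset.le_sup (f := id) hm))
  calc ∑ m ∈ t, ((1:ℝ)/2)^m
      ≤ ∑ m ∈ Finset.range (t.sup id + 1), ((1:ℝ)/2)^m :=
        Finset.sum_le_sum_of_subset_of_nonneg hsub (fun m _ _ => by positivity)
    _ ≤ 2 := sum_geometric_two_le _

end FoldLemmas

section Cubes
variable {d : ℕ}

lemma measurableSet_dyadicCube (Q : DyadicCube d) : MeasurableSet Q.set := by
  have : Q.set = Set.univ.pi
      (fun i => Set.Ico ((2:ℝ)^Q.k * Q.m i) ((2:ℝ)^Q.k * (Q.m i + 1))) := by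
    ext x; simp [DyadicCube.set, Set.mem_pi]
  rw [this]
  exact MeasurableSet.univ_pi fun i => measurableSet_Ico

lemma measure_dyadicCube_lt_top (μ : Measure (Fin d → ℝ)) [IsLocallyFiniteMeasure μ]
    (Q : DyadicCube d) : μ Q.set < ∞ := by
  have hsub : Q.set ⊆
      Set.Icc (fun i => (2:ℝ)^Q.k * Q.m i) (fun i => (2:ℝ)^Q.k * (Q.m i + 1)) := by
    intro x hx
    constructor
    · intro i; exact (hx i).1
    · intro i; exact le_of_lt (hx i).2
  exact lt_of_le_of_lt (measure_mono hsub) (isCompact_Icc.measure_lt_top)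

/-- The cube of generation `n` sitting in the "orthant" given by the sign pattern `σ`. -/
def sgnCube (d : ℕ) (σ : Fin d → Bool) (n : ℕ) : DyadicCube d :=
  ⟨(n : ℤ), fun i => if σ i then 0 else -1⟩

lemma sgnCube_mono (σ : Fin d → Bool) {n n' : ℕ} (h : n ≤ n') :
    (sgnCube d σ n).set ⊆ (sgnCube d σ n').set := by
  intro x hx i
  have h1 := hx i
  have hpow : (2:ℝ) ^ (n:ℤ) ≤ (2:ℝ) ^ (n':ℤ) := by
    apply zpow_le_zpow_right₀ (by norm_num)
    exact_mod_cast h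
  simp only [sgnCube] at h1 ⊢
  by_cases hσ : σ i
  · simp only [hσ, if_true] at h1 ⊢
    push_cast at h1 ⊢
    constructor
    · linarith [h1.1]
    · calc x i < (2:ℝ)^(n:ℤ) * (0+1) := h1.2
        _ ≤ (2:ℝ)^(n':ℤ) * (0+1) := by linarith
  · simp only [hσ, if_false] at h1 ⊢
    push_cast at h1 ⊢
    constructor
    · calc (2:ℝ)^(n':ℤ) * (-1) ≤ (2:ℝ)^(n:ℤ) * (-1) := by linarith
        _ ≤ x i := h1.1
    · linarith [h1.2]

lemma sgnCube_cover (x : Fin d → ℝ) : ∃ σ n, x ∈ (sgnCube d σ n).set := by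
  set M : ℝ := ∑ i, |x i| with hM
  have hMi : ∀ i, |x i| ≤ M := fun i =>
    Finset.single_le_sum (fun j _ => abs_nonneg (x j)) (Finset.mem_univ i)
  obtain ⟨n, hn⟩ := pow_unbounded_of_one_lt M (by norm_num : (1:ℝ) < 2)
  refine ⟨fun i => decide (0 ≤ x i), n, ?_⟩
  intro i
  have hxi : |x i| < 2 ^ n := lt_of_le_of_lt (hMi i) hn
  simp only [sgnCube]
  have hzp : (2:ℝ) ^ ((n:ℕ):ℤ) = 2 ^ n := zpow_natCast 2 n
  by_cases h : 0 ≤ x i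
  · rw [if_pos (by simpa using h)]
    push_cast
    rw [hzp]
    constructor
    · linarith
    · rw [abs_of_nonneg h] at hxi; linarith
  · rw [if_neg (by simpa using h)]
    push_cast
    rw [hzp]
    push_neg at h
    constructor
    · rw [abs_of_neg h] at hxi; linarith
    · linarith

lemma exists_good_sign (μ : Measure (Fin d → ℝ)) (hμ : μ Set.univ = ∞) :
    ∃ σ : Fin d → Bool, ∀ M : ℝ≥0∞, M ≠ ∞ → ∃ n, M < μ (sgnCube d σ n).set := by
  have hcover : (⋃ σ : Fin d → Bool, ⋃ n : ℕ, (sgnCube d σ n).set) = Set.univ := by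
    apply Set.eq_univ_of_forall
    intro x
    obtain ⟨σ, n, hx⟩ := sgnCube_cover x
    exact Set.mem_iUnion.2 ⟨σ, Set.mem_iUnion.2 ⟨n, hx⟩⟩
  have hbig : ∃ σ : Fin d → Bool, μ (⋃ n : ℕ, (sgnCube d σ n).set) = ∞ := by
    by_contra hcon
    push_neg at hcon
    have hle : μ Set.univ ≤ ∑' σ : Fin d → Bool, μ (⋃ n : ℕ, (sgnCube d σ n).set) := by
      rw [← hcover]; exact measure_iUnion_le _
    rw [hμ, tsum_fintype] at hle
    have hfin : (∑ σ : Fin d → Bool, μ (⋃ n : ℕ, (sgnCube d σ n).set)) < ∞ :=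
      ENNReal.sum_lt_top.2 fun σ _ => (hcon σ).lt_top
    exact absurd (lt_of_le_of_lt hle hfin) (lt_irrefl _)
  obtain ⟨σ, hσ⟩ := hbig
  refine ⟨σ, fun M hM => ?_⟩
  have hdir : Directed (· ⊆ ·) (fun n : ℕ => (sgnCube d σ n).set) := by
    intro a b
    exact ⟨max a b, sgnCube_mono σ (le_max_left a b), sgnCube_mono σ (le_max_right a b)⟩
  rw [hdir.measure_iUnion] at hσ
  have h2 : M < ⨆ n, μ (sgnCube d σ n).set := hσ ▸ hM.lt_top
  exact lt_iSup_iff.1 h2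

lemma my_integral_indicator_sum {E : Type*} [NormedAddCommGroup E]
    [NormedSpace ℝ E] [CompleteSpace E]
    (μ : Measure (Fin d → ℝ)) {n : ℕ} (A : Fin n → Set (Fin d → ℝ))
    (hA : ∀ i, MeasurableSet (A i)) (hAfin : ∀ i, μ (A i) ≠ ∞)
    (v : Fin n → E) (s : Set (Fin d → ℝ)) :
    ∫ x in s, (∑ i : Fin n, (A i).indicator (fun _ => v i) x) ∂μ =
      ∑ i : Fin n, (μ (A i ∩ s)).toReal • v i := by
  rw [integral_finset_sum]
  · refine Finset.sum_congr rfl fun i _ => ?_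
    rw [MeasureTheory.setIntegral_indicator (hA i), MeasureTheory.setIntegral_const,
      Set.inter_comm]
    rfl
  · intro i _
    rw [integrable_indicator_iff (hA i)]
    exact integrableOn_const (lt_of_le_of_lt (Measure.restrict_apply_le _ _) (hAfin i).lt_top).ne

end Cubes

/-- from the proof of Theorem 1.2.
Sparse domination of the dyadic lattice maximal operator with exponent `r` (for a locally
finite Borel measure with `μ(ℝ^d) = ∞`) implies an upper `r`-estimate for `E`:
`‖∑ e k‖ ≤ C' (∑ ‖e k‖^r)^{1/r}` for pairwise disjoint `e₁, …, e_n`. -/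
theorem sparse_domination_implies_upper_r_estimate
    {d : ℕ} (hd : 1 ≤ d)
    (E : Type*) [NormedAddCommGroup E] [Lattice E] [HasSolidNorm E] [IsOrderedAddMonoid E] [NormedSpace ℝ E] [CompleteSpace E]
    (μ : Measure (Fin d → ℝ)) [IsLocallyFiniteMeasure μ]
    (hμ : μ Set.univ = ∞)
    (r : ℝ) (hr : 1 < r) (C : ℝ)
    (hdom : ∀ D : Finset (DyadicCube d), ∀ f : (Fin d → ℝ) → E,
      LocallyIntegrable f μ →
      ∃ S ⊆ D, IsSparse μ S ∧
        ∀ᵐ x ∂μ, ‖dyadicMaximal μ D f x‖ ≤ C * sparseOp μ r S (fun y => ‖f y‖) x) :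
    ∃ C' : ℝ, ∀ (n : ℕ) (e : Fin n → E),
      (∀ j k, j ≠ k → |e j| ⊓ |e k| = 0) →
      ‖∑ k, e k‖ ≤ C' * (∑ k, ‖e k‖ ^ r) ^ (1 / r) := by
  classical
  have hr0 : (0:ℝ) < r := lt_trans one_pos hr
  refine ⟨4 * max C 0, ?_⟩
  intro n e hdisj
  -- choose a sign pattern whose orthant has infinite measure
  obtain ⟨σ, hσ⟩ := exists_good_sign μ hμ
  have hfinQ : ∀ k : ℕ, μ (sgnCube d σ k).set ≠ ∞ :=
    fun k => (measure_dyadicCube_lt_top μ _).ne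
  have hstep : ∀ p : ℕ, ∃ k, 2 * μ (sgnCube d σ p).set < μ (sgnCube d σ k).set := fun p =>
    hσ _ (ENNReal.mul_ne_top (by simp) (hfinQ p))
  obtain ⟨k0, hk0⟩ := hσ 0 (by simp)
  set g : ℕ → ℕ := fun p => Classical.choose (hstep p) with hgdef
  have hg : ∀ p, 2 * μ (sgnCube d σ p).set < μ (sgnCube d σ (g p)).set := fun p =>
    Classical.choose_spec (hstep p)
  set seq : ℕ → ℕ := fun m => g^[m] k0 with hseqdef
  have hseq0 : seq 0 = k0 := rfl
  have hseqsucc : ∀ m, seq (m+1) = g (seq m) := fun m => Function.iterate_succ_apply' g m k0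
  set T : ℕ → Set (Fin d → ℝ) := fun m => (sgnCube d σ (seq m)).set with hTdef
  have hTmeas : ∀ m, MeasurableSet (T m) := fun m => measurableSet_dyadicCube _
  have hTfin : ∀ m, μ (T m) ≠ ∞ := fun m => hfinQ _
  have hT0pos : 0 < μ (T 0) := by
    show 0 < μ (sgnCube d σ (seq 0)).set
    rw [hseq0]; exact hk0
  have hTstep : ∀ m, 2 * μ (T m) < μ (T (m+1)) := by
    intro m
    show 2 * μ (sgnCube d σ (seq m)).set < μ (sgnCube d σ (seq (m+1))).set
    rw [hseqsucc m]; exact hg (seq m)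
  have hTpos : ∀ m, 0 < μ (T m) := by
    intro m
    induction m with
    | zero => exact hT0pos
    | succ m ih =>
      refine lt_of_le_of_lt ?_ (hTstep m)
      exact le_trans ih.le (le_mul_of_one_le_left zero_le one_le_two)
  have hseqlt : ∀ m, seq m < seq (m+1) := by
    intro m
    by_contra hcon
    push_neg at hcon
    have h1 : μ (T (m+1)) ≤ μ (T m) := measure_mono (sgnCube_mono σ hcon)
    have h2 : μ (T m) ≤ 2 * μ (T m) := le_mul_of_one_le_left zero_le one_le_two
    exact absurd (lt_of_le_of_lt (h1.trans h2) (hTstep m)) (lt_irrefl _)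
  have hseqmono : StrictMono seq := strictMono_nat_of_lt_succ hseqlt
  have hTmono : ∀ {a b : ℕ}, a ≤ b → T a ⊆ T b := fun h => sgnCube_mono σ (hseqmono.monotone h)
  set τ : ℕ → ℝ := fun m => (μ (T m)).toReal with hτdef
  have hτpos : ∀ m, 0 < τ m := fun m => ENNReal.toReal_pos (hTpos m).ne' (hTfin m)
  have hτstep : ∀ m, 2 * τ m < τ (m+1) := by
    intro m
    have h := (ENNReal.toReal_lt_toReal (ENNReal.mul_ne_top (by simp) (hTfin m))
      (hTfin (m+1))).2 (hTstep m)
    rw [ENNReal.toReal_mul] at h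
    simpa using h
  have hτdouble : ∀ m p : ℕ, τ m * 2 ^ p ≤ τ (m + p) := by
    intro m p
    induction p with
    | zero => simp
    | succ p ih =>
      have h1 := hτstep (m + p)
      calc τ m * 2 ^ (p+1) = (τ m * 2 ^ p) * 2 := by ring
        _ ≤ τ (m + p) * 2 := mul_le_mul_of_nonneg_right ih (by norm_num)
        _ ≤ τ (m + p + 1) := by linarith
  -- annuli and the test function
  set A : Fin n → Set (Fin d → ℝ) := fun j => T ((j:ℕ)+1) \ T (j:ℕ) with hAdef
  have hAmeas : ∀ j, MeasurableSet (A j) := fun j => (hTmeas _).diff (hTmeas _)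
  have hAsub : ∀ j : Fin n, A j ⊆ T ((j:ℕ)+1) := fun j => Set.diff_subset
  have hAfin : ∀ j, μ (A j) ≠ ∞ :=
    fun j => (lt_of_le_of_lt (measure_mono (hAsub j)) (hTfin _).lt_top).ne
  have hAdisj : ∀ i ∈ (Finset.univ : Finset (Fin n)), ∀ j ∈ (Finset.univ : Finset (Fin n)),
      i ≠ j → Disjoint (A i) (A j) := by
    have key : ∀ i j : Fin n, (i:ℕ) < (j:ℕ) → Disjoint (A i) (A j) := by
      intro i j hij
      rw [Set.disjoint_left]
      intro x hxi hxj
      exact hxj.2 (hTmono (by omega : (i:ℕ)+1 ≤ (j:ℕ)) hxi.1)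
    intro i _ j _ hij
    have hne : (i:ℕ) ≠ (j:ℕ) := fun h => hij (Fin.ext h)
    rcases lt_or_gt_of_ne hne with h | h
    · exact key i j h
    · exact (key j i h).symm
  set f : (Fin d → ℝ) → E := fun x => ∑ j : Fin n, (A j).indicator (fun _ => e j) x with hfdef
  have hfint : Integrable f μ := by
    apply integrable_finset_sum
    intro j _
    rw [integrable_indicator_iff (hAmeas j)]
    exact integrableOn_const (hAfin j)
  -- intersection identities
  have hinterfull : ∀ i j : Fin n, (i:ℕ) ≤ (j:ℕ) → A i ∩ T ((j:ℕ)+1) = A i := by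
    intro i j hij
    exact Set.inter_eq_left.2 ((hAsub i).trans (hTmono (by omega)))
  have hinterempty : ∀ i j : Fin n, (j:ℕ) < (i:ℕ) → A i ∩ T ((j:ℕ)+1) = ∅ := by
    intro i j hij
    ext y
    simp only [Set.mem_inter_iff, Set.mem_empty_iff_false, iff_false, not_and]
    intro hyi hyT
    exact hyi.2 (hTmono (by omega : (j:ℕ)+1 ≤ (i:ℕ)) hyT)
  set κ : Fin n → Fin n → ℝ := fun i j => (μ (A i ∩ T ((j:ℕ)+1))).toReal with hκdef
  have hκnonneg : ∀ i j, 0 ≤ κ i j := fun i j => ENNReal.toReal_nonneg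
  have hκdiag : ∀ j : Fin n, τ ((j:ℕ)+1) - τ (j:ℕ) ≤ κ j j := by
    intro j
    have h1 : κ j j = (μ (A j)).toReal := by
      rw [hκdef]; simp only; rw [hinterfull j j le_rfl]
    have h2 : μ (A j) = μ (T ((j:ℕ)+1)) - μ (T (j:ℕ)) := by
      rw [hAdef]
      exact measure_diff (hTmono (Nat.le_succ _)) (hTmeas _).nullMeasurableSet (hTfin _)
    rw [h1, h2, ENNReal.toReal_sub_of_le (measure_mono (hTmono (Nat.le_succ _))) (hTfin _)]
  -- pointwise formulas
  have hptabs : ∀ y, |f y| = ∑ i : Fin n, (A i).indicator (fun _ => |e i|) y := fun y =>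
    my_indicator_sum Finset.univ A e (fun v => |v|) abs_zero hAdisj y
  have hptnorm : ∀ y, ‖f y‖ = ∑ i : Fin n, (A i).indicator (fun _ => ‖e i‖) y := fun y =>
    my_indicator_sum Finset.univ A e (fun v => ‖v‖) norm_zero hAdisj y
  -- integral identities
  have hIntAbs : ∀ j : Fin n,
      ∫ y in T ((j:ℕ)+1), |f y| ∂μ = ∑ i : Fin n, κ i j • |e i| := by
    intro j
    have hfun : (fun y => |f y|) = fun y => ∑ i : Fin n, (A i).indicator (fun _ => |e i|) y :=
      funext hptabs
    rw [hfun, my_integral_indicator_sum μ A hAmeas hAfin _ _]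
  have hIntNorm : ∀ j : Fin n,
      ∫ y in T ((j:ℕ)+1), ‖f y‖ ∂μ = ∑ i : Fin n, κ i j * ‖e i‖ := by
    intro j
    have hfun : (fun y => ‖f y‖) = fun y => ∑ i : Fin n, (A i).indicator (fun _ => ‖e i‖) y :=
      funext hptnorm
    rw [hfun, my_integral_indicator_sum μ A hAmeas hAfin _ _]
    simp [smul_eq_mul]
    rfl
  -- the finite collection of cubes
  set D : Finset (DyadicCube d) :=
    Finset.image (fun j : Fin n => sgnCube d σ (seq ((j:ℕ)+1))) Finset.univ with hDdef
  have hPinj : ∀ x ∈ (Finset.univ : Finset (Fin n)), ∀ y ∈ (Finset.univ : Finset (Fin n)),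
      sgnCube d σ (seq ((x:ℕ)+1)) = sgnCube d σ (seq ((y:ℕ)+1)) → x = y := by
    intro a _ b _ hab
    have h1 : ((seq ((a:ℕ)+1) : ℕ) : ℤ) = ((seq ((b:ℕ)+1) : ℕ) : ℤ) :=
      congrArg DyadicCube.k hab
    have h2 : seq ((a:ℕ)+1) = seq ((b:ℕ)+1) := by exact_mod_cast h1
    have h3 := hseqmono.injective h2
    exact Fin.ext (by omega)
  obtain ⟨S, hSD, hSsparse, hae⟩ := hdom D f hfint.locallyIntegrable
  -- pick a point in `T 0` where the pointwise sparse bound holds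
  set G : Set (Fin d → ℝ) :=
    {x | ‖dyadicMaximal μ D f x‖ ≤ C * sparseOp μ r S (fun y => ‖f y‖) x} with hGdef
  have hbad : μ {x | ¬ (‖dyadicMaximal μ D f x‖ ≤ C * sparseOp μ r S (fun y => ‖f y‖) x)} = 0 := hae
  have hgood : (T 0 ∩ G).Nonempty := by
    apply nonempty_of_measure_ne_zero (μ := μ)
    intro hzero
    have h1 : μ (T 0) ≤ μ (T 0 ∩ G) + μ (T 0 \ G) := measure_le_inter_add_diff μ (T 0) G
    have h2 : μ (T 0 \ G) = 0 := le_antisymm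
      (le_trans (measure_mono (fun y hy => hy.2)) hbad.le) zero_le
    rw [hzero, h2, add_zero] at h1
    exact absurd (lt_of_lt_of_le hT0pos h1) (lt_irrefl _)
  obtain ⟨x, hxT0, hxG⟩ := hgood
  have hxTall : ∀ m, x ∈ T m := fun m => hTmono (Nat.zero_le m) hxT0
  -- lower bound for the maximal function
  have hfold := my_le_fold D
    (fun Q => Set.indicator Q.set (fun _ => avg μ Q.set fun y => |f y|) x) 0
  have hM0 : 0 ≤ dyadicMaximal μ D f x := by
    rw [dyadicMaximal]; exact hfold.1
  have hMj : ∀ j : Fin n, avg μ (T ((j:ℕ)+1)) (fun y => |f y|) ≤ dyadicMaximal μ D f x := by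
    intro j
    have hmem : sgnCube d σ (seq ((j:ℕ)+1)) ∈ D :=
      Finset.mem_image.2 ⟨j, Finset.mem_univ j, rfl⟩
    have h := hfold.2 _ hmem
    rw [Set.indicator_of_mem (hxTall ((j:ℕ)+1))] at h
    rw [dyadicMaximal]
    exact h
  have havglow : ∀ j : Fin n,
      (1/2 : ℝ) • |e j| ≤ avg μ (T ((j:ℕ)+1)) (fun y => |f y|) := by
    intro j
    have hsum : κ j j • |e j| ≤ ∑ i : Fin n, κ i j • |e i| :=
      Finset.single_le_sum (f := fun i => κ i j • |e i|)
        (fun i _ => my_smul_nonneg (hκnonneg i j) (abs_nonneg _)) (Finset.mem_univ j)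
    have h1 : avg μ (T ((j:ℕ)+1)) (fun y => |f y|)
        = (τ ((j:ℕ)+1))⁻¹ • ∑ i : Fin n, κ i j • |e i| := by
      rw [avg, hIntAbs j]
    rw [h1]
    calc (1/2 : ℝ) • |e j| ≤ ((τ ((j:ℕ)+1))⁻¹ * κ j j) • |e j| := by
          apply my_smul_le_smul _ (abs_nonneg _)
          have hp := hτpos ((j:ℕ)+1)
          have hs := hτstep (j:ℕ)
          have hd2 := hκdiag j
          rw [inv_mul_eq_div, le_div_iff₀ hp]
          have := hτpos (j:ℕ)
          nlinarith
      _ = (τ ((j:ℕ)+1))⁻¹ • (κ j j • |e j|) := by rw [smul_smul]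
      _ ≤ (τ ((j:ℕ)+1))⁻¹ • ∑ i : Fin n, κ i j • |e i| :=
          my_smul_le_smul_vec _ (inv_nonneg.2 (hτpos _).le) hsum
  have hMj2 : ∀ j : Fin n, |e j| ≤ (2:ℝ) • dyadicMaximal μ D f x := by
    intro j
    have h1 : (1/2:ℝ) • |e j| ≤ dyadicMaximal μ D f x := (havglow j).trans (hMj j)
    have h2 := my_smul_le_smul_vec (2:ℝ) (by norm_num) h1
    rw [smul_smul] at h2
    have h3 : (2:ℝ) * (1/2) = 1 := by norm_num
    rwa [h3, one_smul] at h2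
  have hnormsum : ‖∑ k, e k‖ ≤ 2 * ‖dyadicMaximal μ D f x‖ := by
    have hsumabs : ∑ j : Fin n, |e j| ≤ (2:ℝ) • dyadicMaximal μ D f x :=
      my_sum_le_of_pairwise_disjoint (fun i _ => abs_nonneg _)
        (fun i _ j _ hij => hdisj i j hij)
        (my_smul_nonneg (by norm_num) hM0) (fun i _ => hMj2 i)
    have habs : |∑ k, e k| ≤ |(2:ℝ) • dyadicMaximal μ D f x| := by
      refine le_trans (my_abs_sum_le Finset.univ e) ?_
      rw [abs_of_nonneg (my_smul_nonneg (by norm_num : (0:ℝ) ≤ 2) hM0)]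
      exact hsumabs
    have h := norm_le_norm_of_abs_le_abs habs
    rw [norm_smul] at h
    simpa using h
  -- upper bound for the sparse operator
  set w : Fin n → Fin n → ℝ :=
    fun i j => if (i:ℕ) ≤ (j:ℕ) then ((1:ℝ)/2) ^ ((j:ℕ) - (i:ℕ)) else 0 with hwdef
  have hwnonneg : ∀ i j, 0 ≤ w i j := by
    intro i j
    rw [hwdef]
    by_cases hij : (i:ℕ) ≤ (j:ℕ)
    · simp only [hij, if_true]; positivity
    · simp only [hij, if_false]; exact le_rfl
  have hwrow : ∀ j : Fin n, ∑ i, w i j ≤ 2 := by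
    intro j
    rw [hwdef]
    rw [← Finset.sum_filter]
    refine my_geom_sum _ (fun i : Fin n => (j:ℕ) - (i:ℕ)) ?_
    intro i1 h1 i2 h2 hvals
    rw [Finset.mem_filter] at h1 h2
    obtain ⟨-, h1⟩ := h1
    obtain ⟨-, h2⟩ := h2
    exact Fin.ext (by omega)
  have hwcol : ∀ i : Fin n, ∑ j, w i j ≤ 2 := by
    intro i
    rw [hwdef]
    rw [← Finset.sum_filter]
    refine my_geom_sum _ (fun j : Fin n => (j:ℕ) - (i:ℕ)) ?_
    intro j1 h1 j2 h2 hvals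
    rw [Finset.mem_filter] at h1 h2
    obtain ⟨-, h1⟩ := h1
    obtain ⟨-, h2⟩ := h2
    exact Fin.ext (by omega)
  have hcoef : ∀ i j : Fin n, (τ ((j:ℕ)+1))⁻¹ * κ i j ≤ w i j := by
    intro i j
    by_cases hij : (i:ℕ) ≤ (j:ℕ)
    · have hκle : κ i j ≤ τ ((i:ℕ)+1) := by
        rw [hκdef]
        refine (ENNReal.toReal_le_toReal ?_ (hTfin _)).2
          (measure_mono ((Set.inter_subset_left).trans (hAsub i)))
        exact (lt_of_le_of_lt (measure_mono Set.inter_subset_left)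
          (lt_of_le_of_lt (measure_mono (hAsub i)) (hTfin _).lt_top)).ne
      have hdouble : τ ((i:ℕ)+1) * 2 ^ ((j:ℕ) - (i:ℕ)) ≤ τ ((j:ℕ)+1) := by
        have h := hτdouble ((i:ℕ)+1) ((j:ℕ)-(i:ℕ))
        rwa [show (i:ℕ)+1+((j:ℕ)-(i:ℕ)) = (j:ℕ)+1 by omega] at h
      have hhp : (0:ℝ) < ((1:ℝ)/2) ^ ((j:ℕ) - (i:ℕ)) := by positivity
      have hpow : ((1:ℝ)/2) ^ ((j:ℕ)-(i:ℕ)) * 2 ^ ((j:ℕ)-(i:ℕ)) = 1 := by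
        rw [← mul_pow]; norm_num
      have h3 := mul_le_mul_of_nonneg_left hdouble hhp.le
      rw [show ((1:ℝ)/2) ^ ((j:ℕ)-(i:ℕ)) * (τ ((i:ℕ)+1) * 2 ^ ((j:ℕ)-(i:ℕ)))
          = (((1:ℝ)/2) ^ ((j:ℕ)-(i:ℕ)) * 2 ^ ((j:ℕ)-(i:ℕ))) * τ ((i:ℕ)+1) by ring,
        hpow, one_mul] at h3
      have hw : w i j = ((1:ℝ)/2) ^ ((j:ℕ) - (i:ℕ)) := by rw [hwdef]; simp [hij]
      rw [hw, inv_mul_eq_div, div_le_iff₀ (hτpos _)]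
      exact hκle.trans h3
    · have hκ0 : κ i j = 0 := by
        rw [hκdef]
        simp only
        rw [hinterempty i j (by omega)]
        simp
      have hw : w i j = 0 := by rw [hwdef]; simp [hij]
      rw [hκ0, hw, mul_zero]
  have havgnorm : ∀ j : Fin n, avg μ (T ((j:ℕ)+1)) (fun y => |‖f y‖|)
      = (τ ((j:ℕ)+1))⁻¹ * ∑ i : Fin n, κ i j * ‖e i‖ := by
    intro j
    have hfun : (fun y => |‖f y‖|) = fun y => ‖f y‖ := by
      funext y; exact abs_norm _
    rw [avg, hfun, hIntNorm j, smul_eq_mul]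
  have havgnn : ∀ j : Fin n, 0 ≤ avg μ (T ((j:ℕ)+1)) (fun y => |‖f y‖|) := by
    intro j
    rw [havgnorm j]
    refine mul_nonneg (inv_nonneg.2 (hτpos _).le) (Finset.sum_nonneg fun i _ =>
      mul_nonneg (hκnonneg i j) (norm_nonneg _))
  have hkey : ∀ j : Fin n, (avg μ (T ((j:ℕ)+1)) (fun y => |‖f y‖|)) ^ r
      ≤ 2 ^ (r-1) * ∑ i : Fin n, w i j * ‖e i‖ ^ r := by
    intro j
    set W := ∑ i : Fin n, w i j with hW
    have hW1 : 1 ≤ W := by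
      have hwj : w j j = 1 := by rw [hwdef]; simp
      rw [hW]
      calc (1:ℝ) = w j j := hwj.symm
        _ ≤ ∑ i : Fin n, w i j :=
          Finset.single_le_sum (fun i _ => hwnonneg i j) (Finset.mem_univ j)
    have hWpos : (0:ℝ) < W := lt_of_lt_of_le one_pos hW1
    have hW2 : W ≤ 2 := hwrow j
    have havgle : avg μ (T ((j:ℕ)+1)) (fun y => |‖f y‖|) ≤ ∑ i : Fin n, w i j * ‖e i‖ := by
      rw [havgnorm j, Finset.mul_sum]
      refine Finset.sum_le_sum fun i _ => ?_
      rw [← mul_assoc]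
      exact mul_le_mul_of_nonneg_right (hcoef i j) (norm_nonneg _)
    have hsumnn : (0:ℝ) ≤ ∑ i : Fin n, (w i j / W) * ‖e i‖ :=
      Finset.sum_nonneg fun i _ =>
        mul_nonneg (div_nonneg (hwnonneg i j) hWpos.le) (norm_nonneg _)
    have hjensen := Real.rpow_arith_mean_le_arith_mean_rpow Finset.univ
      (fun i => w i j / W) (fun i => ‖e i‖)
      (fun i _ => div_nonneg (hwnonneg i j) hWpos.le)
      (by rw [← Finset.sum_div, ← hW, div_self hWpos.ne']) (fun i _ => norm_nonneg _) hr.le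
    have hWsum : W * ∑ i : Fin n, (w i j / W) * ‖e i‖ = ∑ i : Fin n, w i j * ‖e i‖ := by
      rw [Finset.mul_sum]
      refine Finset.sum_congr rfl fun i _ => ?_
      field_simp
    have hfactor : ∑ i : Fin n, (w i j / W) * ‖e i‖ ^ r
        = (∑ i : Fin n, w i j * ‖e i‖ ^ r) / W := by
      rw [Finset.sum_div]
      refine Finset.sum_congr rfl fun i _ => by ring
    have hsumr_nn : (0:ℝ) ≤ ∑ i : Fin n, w i j * ‖e i‖ ^ r :=
      Finset.sum_nonneg fun i _ =>
        mul_nonneg (hwnonneg i j) (Real.rpow_nonneg (norm_nonneg _) r)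
    calc (avg μ (T ((j:ℕ)+1)) (fun y => |‖f y‖|)) ^ r
        ≤ (∑ i : Fin n, w i j * ‖e i‖) ^ r :=
          Real.rpow_le_rpow (havgnn j) havgle hr0.le
      _ = (W * ∑ i : Fin n, (w i j / W) * ‖e i‖) ^ r := by rw [hWsum]
      _ = W ^ r * (∑ i : Fin n, (w i j / W) * ‖e i‖) ^ r :=
          Real.mul_rpow hWpos.le hsumnn
      _ ≤ W ^ r * (∑ i : Fin n, (w i j / W) * ‖e i‖ ^ r) :=
          mul_le_mul_of_nonneg_left hjensen (Real.rpow_nonneg hWpos.le r)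
      _ = W ^ (r-1) * ∑ i : Fin n, w i j * ‖e i‖ ^ r := by
          rw [hfactor, Real.rpow_sub hWpos, Real.rpow_one]
          ring
      _ ≤ 2 ^ (r-1) * ∑ i : Fin n, w i j * ‖e i‖ ^ r :=
          mul_le_mul_of_nonneg_right
            (Real.rpow_le_rpow hWpos.le hW2 (by linarith)) hsumr_nn
  -- summing up the sparse operator
  have hterm_nonneg : ∀ Q : DyadicCube d,
      0 ≤ Set.indicator Q.set (fun _ => avg μ Q.set (fun y => |‖f y‖|) ^ r) x := by
    intro Q
    refine Set.indicator_nonneg (fun y _ => ?_) x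
    refine Real.rpow_nonneg ?_ r
    rw [avg, smul_eq_mul]
    exact mul_nonneg (inv_nonneg.2 ENNReal.toReal_nonneg)
      (integral_nonneg fun y => abs_nonneg _)
  have hSP : sparseOp μ r S (fun y => ‖f y‖) x ≤ 2 * (∑ k, ‖e k‖ ^ r) ^ (1/r) := by
    rw [sparseOp]
    have h1 : (∑ Q ∈ S, Set.indicator Q.set (fun _ => avg μ Q.set (fun y => |‖f y‖|) ^ r) x)
        ≤ ∑ j : Fin n, (avg μ (T ((j:ℕ)+1)) (fun y => |‖f y‖|)) ^ r := by
      calc ∑ Q ∈ S, Set.indicator Q.set (fun _ => avg μ Q.set (fun y => |‖f y‖|) ^ r) x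
          ≤ ∑ Q ∈ D, Set.indicator Q.set (fun _ => avg μ Q.set (fun y => |‖f y‖|) ^ r) x :=
            Finset.sum_le_sum_of_subset_of_nonneg hSD (fun Q _ _ => hterm_nonneg Q)
        _ = ∑ j : Fin n, Set.indicator (T ((j:ℕ)+1))
              (fun _ => avg μ (T ((j:ℕ)+1)) (fun y => |‖f y‖|) ^ r) x := by
            rw [hDdef]
            exact Finset.sum_image hPinj
        _ = ∑ j : Fin n, (avg μ (T ((j:ℕ)+1)) (fun y => |‖f y‖|)) ^ r :=
            Finset.sum_congr rfl fun j _ => Set.indicator_of_mem (hxTall _) _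
    have h2 : ∑ j : Fin n, (avg μ (T ((j:ℕ)+1)) (fun y => |‖f y‖|)) ^ r
        ≤ 2 ^ (r-1) * ∑ j : Fin n, ∑ i : Fin n, w i j * ‖e i‖ ^ r := by
      calc ∑ j : Fin n, (avg μ (T ((j:ℕ)+1)) (fun y => |‖f y‖|)) ^ r
          ≤ ∑ j : Fin n, 2 ^ (r-1) * ∑ i : Fin n, w i j * ‖e i‖ ^ r :=
            Finset.sum_le_sum fun j _ => hkey j
        _ = 2 ^ (r-1) * ∑ j : Fin n, ∑ i : Fin n, w i j * ‖e i‖ ^ r := by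
            rw [Finset.mul_sum]
    have h3 : ∑ j : Fin n, ∑ i : Fin n, w i j * ‖e i‖ ^ r ≤ 2 * ∑ k, ‖e k‖ ^ r := by
      rw [Finset.sum_comm]
      calc ∑ i : Fin n, ∑ j : Fin n, w i j * ‖e i‖ ^ r
          = ∑ i : Fin n, (∑ j : Fin n, w i j) * ‖e i‖ ^ r := by
            refine Finset.sum_congr rfl fun i _ => ?_
            rw [Finset.sum_mul]
        _ ≤ ∑ i : Fin n, 2 * ‖e i‖ ^ r :=
            Finset.sum_le_sum fun i _ => mul_le_mul_of_nonneg_right (hwcol i)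
              (Real.rpow_nonneg (norm_nonneg _) r)
        _ = 2 * ∑ k, ‖e k‖ ^ r := by rw [Finset.mul_sum]
    have hbase : (∑ Q ∈ S, Set.indicator Q.set (fun _ => avg μ Q.set (fun y => |‖f y‖|) ^ r) x)
        ≤ 2 ^ r * ∑ k, ‖e k‖ ^ r := by
      calc (∑ Q ∈ S, Set.indicator Q.set (fun _ => avg μ Q.set (fun y => |‖f y‖|) ^ r) x)
          ≤ 2 ^ (r-1) * ∑ j : Fin n, ∑ i : Fin n, w i j * ‖e i‖ ^ r := h1.trans h2
        _ ≤ 2 ^ (r-1) * (2 * ∑ k, ‖e k‖ ^ r) :=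
            mul_le_mul_of_nonneg_left h3 (Real.rpow_nonneg (by norm_num) _)
        _ = 2 ^ r * ∑ k, ‖e k‖ ^ r := by
            rw [Real.rpow_sub (by norm_num : (0:ℝ) < 2), Real.rpow_one]
            ring
    have hsum_nn : (0:ℝ) ≤ ∑ k, ‖e k‖ ^ r :=
      Finset.sum_nonneg fun k _ => Real.rpow_nonneg (norm_nonneg _) r
    calc (∑ Q ∈ S, Set.indicator Q.set (fun _ => avg μ Q.set (fun y => |‖f y‖|) ^ r) x) ^ (1/r)
        ≤ (2 ^ r * ∑ k, ‖e k‖ ^ r) ^ (1/r) :=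
          Real.rpow_le_rpow (Finset.sum_nonneg fun Q _ => hterm_nonneg Q) hbase (by positivity)
      _ = 2 * (∑ k, ‖e k‖ ^ r) ^ (1/r) := by
          rw [Real.mul_rpow (by positivity) hsum_nn]
          congr 1
          rw [← Real.rpow_mul (by norm_num : (0:ℝ) ≤ 2), mul_one_div,
            div_self hr0.ne', Real.rpow_one]
  -- put everything together
  have hSPnn : 0 ≤ sparseOp μ r S (fun y => ‖f y‖) x := by
    rw [sparseOp]
    exact Real.rpow_nonneg (Finset.sum_nonneg fun Q _ => hterm_nonneg Q) _
  have hx2 : ‖dyadicMaximal μ D f x‖ ≤ C * sparseOp μ r S (fun y => ‖f y‖) x := hxG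
  calc ‖∑ k, e k‖ ≤ 2 * ‖dyadicMaximal μ D f x‖ := hnormsum
    _ ≤ 2 * (C * sparseOp μ r S (fun y => ‖f y‖) x) := by linarith
    _ ≤ 2 * (max C 0 * sparseOp μ r S (fun y => ‖f y‖) x) := by
        have := mul_le_mul_of_nonneg_right (le_max_left C 0) hSPnn
        linarith
    _ ≤ 2 * (max C 0 * (2 * (∑ k, ‖e k‖ ^ r) ^ (1/r))) := by
        have := mul_le_mul_of_nonneg_left hSP (le_max_right C 0)
        linarith
    _ = 4 * max C 0 * (∑ k, ‖e k‖ ^ r) ^ (1/r) := by ring
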